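/- Let Λ be a finite set and X a finite set. If P and P' are two strictly positive probability distributions on X^Λ whose one-point conditional distributions coincide (i.e., for every t ∈ Λ, x ∈ X, z ∈ X^{Λ\{t}}, P(xz)/Σ_u P(uz) = P'(xz)/Σ_u P'(uz)), then P = P'. -/
import Mathlib


def cat {Λ X : Type*} [DecidableEq Λ] (t : Λ) (x : X) (z : {s : Λ // s ≠ t} → X) : Λ → X :=
  fun s => if h : s = t then x else z ⟨s, h⟩

def catT {Λ X : Type*} [DecidableEq Λ] (t s : Λ) (y : X) (z : {r : Λ // r ≠ t ∧ r ≠ s} → X) :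
    {r : Λ // r ≠ t} → X :=
  fun r => if h : r.1 = s then y else z ⟨r.1, r.2, h⟩

def catS {Λ X : Type*} [DecidableEq Λ] (t s : Λ) (x : X) (z : {r : Λ // r ≠ t ∧ r ≠ s} → X) :
    {r : Λ // r ≠ s} → X :=
  fun r => if h : r.1 = t then x else z ⟨r.1, h, r.2⟩

theorem stmt2 {Λ X : Type*} [DecidableEq Λ] [Fintype Λ] [Fintype X]
    [Nonempty Λ] [Nonempty X]
    (P P' : (Λ → X) → ℝ)
    (hpos : ∀ σ, 0 < P σ) (hsum : ∑ σ, P σ = 1)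
    (hpos' : ∀ σ, 0 < P' σ) (hsum' : ∑ σ, P' σ = 1)
    (hcond : ∀ t : Λ, ∀ x : X, ∀ z : {s : Λ // s ≠ t} → X,
      P (cat t x z) / ∑ u : X, P (cat t u z) = P' (cat t x z) / ∑ u : X, P' (cat t u z)) :
    P = P' := by
  classical
  -- key one-site lemma
  have key : ∀ (t : Λ) (x y : X) (z : {s : Λ // s ≠ t} → X),
      P (cat t x z) * P' (cat t y z) = P' (cat t x z) * P (cat t y z) := by
    intro t x y z
    set S := ∑ u : X, P (cat t u z) with hS
    set S' := ∑ u : X, P' (cat t u z) with hS'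
    have hSpos : 0 < S := Finset.sum_pos (fun u _ => hpos _) Finset.univ_nonempty
    have hS'pos : 0 < S' := Finset.sum_pos (fun u _ => hpos' _) Finset.univ_nonempty
    have h1 : P (cat t x z) * S' = P' (cat t x z) * S :=
      (div_eq_div_iff hSpos.ne' hS'pos.ne').mp (hcond t x z)
    have h2 : P (cat t y z) * S' = P' (cat t y z) * S :=
      (div_eq_div_iff hSpos.ne' hS'pos.ne').mp (hcond t y z)
    have hmul : P (cat t x z) * P' (cat t y z) * (S * S')
        = P' (cat t x z) * P (cat t y z) * (S * S') := by
      calc P (cat t x z) * P' (cat t y z) * (S * S')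
          = (P (cat t x z) * S') * (P' (cat t y z) * S) := by ring
        _ = (P' (cat t x z) * S) * (P (cat t y z) * S') := by rw [h1, ← h2]
        _ = P' (cat t x z) * P (cat t y z) * (S * S') := by ring
    exact mul_right_cancel₀ (by positivity) hmul
  -- ratio is constant: P σ * P' τ = P' σ * P τ for all σ τ
  have hmul : ∀ (n : ℕ) (σ τ : Λ → X),
      (Finset.univ.filter fun s => σ s ≠ τ s).card = n → P σ * P' τ = P' σ * P τ := by
    intro n
    induction n using Nat.strong_induction_on with
    | _ n ih =>
      intro σ τ hcard
      rcases Nat.eq_zero_or_pos n with hn | hn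
      · have : σ = τ := by
          funext s
          by_contra hs
          have : s ∈ Finset.univ.filter fun s => σ s ≠ τ s := by simp [hs]
          rw [Finset.card_eq_zero.mp (hcard.trans hn)] at this
          simp at this
        rw [this]; ring
      · obtain ⟨t, ht⟩ := Finset.card_pos.mp (show 0 < _ from hcard ▸ hn)
        have htne : σ t ≠ τ t := by simpa using ht
        set z : {s : Λ // s ≠ t} → X := fun s => σ s.1 with hz
        have hσ : σ = cat t (σ t) z := by
          funext s
          by_cases h : s = t
          · subst h; simp [cat]
          · simp [cat, h, hz]
        set σ' := cat t (τ t) z with hσ'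
        have hsub : (Finset.univ.filter fun s => σ' s ≠ τ s)
            ⊆ (Finset.univ.filter fun s => σ s ≠ τ s).erase t := by
          intro s hs
          simp only [Finset.mem_filter, Finset.mem_univ, true_and] at hs
          by_cases h : s = t
          · exfalso; apply hs; subst h; simp [σ', cat]
          · refine Finset.mem_erase.mpr ⟨h, ?_⟩
            simp only [Finset.mem_filter, Finset.mem_univ, true_and]
            simpa [σ', cat, h, hz] using hs
        have hlt : (Finset.univ.filter fun s => σ' s ≠ τ s).card < n := by
          calc (Finset.univ.filter fun s => σ' s ≠ τ s).card
              ≤ ((Finset.univ.filter fun s => σ s ≠ τ s).erase t).card :=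
                Finset.card_le_card hsub
            _ < (Finset.univ.filter fun s => σ s ≠ τ s).card :=
                Finset.card_erase_lt_of_mem ht
            _ = n := hcard
        have hIH : P σ' * P' τ = P' σ' * P τ := ih _ hlt σ' τ rfl
        have hk : P σ * P' σ' = P' σ * P σ' := by
          rw [hσ]; exact key t (σ t) (τ t) z
        have hpσ' : P' σ' ≠ 0 := (hpos' σ').ne'
        have : P σ * P' τ * P' σ' = P' σ * P τ * P' σ' := by
          have h3 : P σ * P' σ' * P' τ = P' σ * P σ' * P' τ := by rw [hk]
          calc P σ * P' τ * P' σ' = P σ * P' σ' * P' τ := by ring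
            _ = P' σ * P σ' * P' τ := h3
            _ = P' σ * (P σ' * P' τ) := by ring
            _ = P' σ * (P' σ' * P τ) := by rw [hIH]
            _ = P' σ * P τ * P' σ' := by ring
        exact mul_right_cancel₀ hpσ' this
  funext τ
  have h1 : ∑ σ, P σ * P' τ = ∑ σ, P' σ * P τ :=
    Finset.sum_congr rfl fun σ _ => hmul _ σ τ rfl
  rw [← Finset.sum_mul, ← Finset.sum_mul, hsum, hsum', one_mul, one_mul] at h1
  exact h1.symm
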